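/- Let n ≥ 1, let 1 ≤ i < j ≤ n be top positions and 1 ≤ k < l ≤ n be bottom positions. Suppose μ and μ' are Brauer diagrams of size n that agree on every edge not incident to any of T_i, T_j, B_k, B_l, and that μ contains the cup {T_i,T_j} and the cap {B_k,B_l}, while μ' contains the arcs {T_i,B_k} and {T_j,B_l}. Then χ(μ) ≡ χ(μ') (mod 2), i.e. (−1)^{χ(μ)} = (−1)^{χ(μ')}. -/

import Mathlib

open Finset

/-- Vertices of a Brauer diagram of size `n`: `Sum.inl i` is the top point `T i`
and `Sum.inr m` is the bottom point `B m` (positions indexed left to right by `Fin n`). -/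
abbrev BVertex (n : ℕ) := Fin n ⊕ Fin n

/-- A Brauer diagram of size `n` is a perfect matching of the `2n` vertices,
encoded as a fixed-point-free involution. -/
def BrauerDiagram (n : ℕ) :=
  {f : Equiv.Perm (BVertex n) // (∀ x, f (f x) = x) ∧ (∀ x, f x ≠ x)}

instance (n : ℕ) : Fintype (BrauerDiagram n) := Subtype.fintype _

/-- An edge of a Brauer diagram: a cup joins two top points, a cap joins two bottom
points, and an arc joins a top point and a bottom point. In `cup i j` and `cap i j`
we maintain `i < j`, and in `arc i m`, `i` is the top position and `m` the bottom one. -/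
inductive BEdge (n : ℕ)
  | cup : Fin n → Fin n → BEdge n
  | cap : Fin n → Fin n → BEdge n
  | arc : Fin n → Fin n → BEdge n
deriving DecidableEq

/-- The canonical edge with endpoints `x` and `y`. -/
def edgeOf {n : ℕ} : BVertex n → BVertex n → BEdge n
  | .inl i, .inl j => .cup (min i j) (max i j)
  | .inr i, .inr j => .cap (min i j) (max i j)
  | .inl i, .inr m => .arc i m
  | .inr m, .inl i => .arc i m

/-- Whether two edges of a Brauer diagram cross. -/
def crosses {n : ℕ} : BEdge n → BEdge n → Bool
  | .cup i j, .cup k l => decide ((i < k ∧ k < j ∧ j < l) ∨ (k < i ∧ i < l ∧ l < j))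
  | .cap i j, .cap k l => decide ((i < k ∧ k < j ∧ j < l) ∨ (k < i ∧ i < l ∧ l < j))
  | .cup _ _, .cap _ _ => false
  | .cap _ _, .cup _ _ => false
  | .cup i j, .arc k _ => decide (i < k ∧ k < j)
  | .arc k _, .cup i j => decide (i < k ∧ k < j)
  | .cap i j, .arc _ m => decide (i < m ∧ m < j)
  | .arc _ m, .cap i j => decide (i < m ∧ m < j)
  | .arc i m, .arc j m' => decide ((i < j ∧ m' < m) ∨ (j < i ∧ m < m'))

/-- The set of edges of a Brauer diagram. -/
def edges {n : ℕ} (μ : BrauerDiagram n) : Finset (BEdge n) :=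
  Finset.univ.image fun x => edgeOf x (μ.1 x)

/-- The crossing number of a Brauer diagram: the number of unordered pairs of
its edges that cross. -/
def crossingNumber {n : ℕ} (μ : BrauerDiagram n) : ℕ :=
  ((edges μ).offDiag.filter fun p => crosses p.1 p.2 = true).card / 2

-- auxiliary
lemma crosses_self {n : ℕ} (e : BEdge n) : crosses e e = false := by
  cases e <;> simp [crosses]

lemma crosses_comm {n : ℕ} (e f : BEdge n) : crosses e f = crosses f e := by
  cases e <;> cases f <;> simp only [crosses, decide_eq_decide] <;> tauto

def Ncount {n : ℕ} (S : Finset (BEdge n)) : ℕ := ∑ e ∈ S, ∑ f ∈ S, (crosses e f).toNat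

lemma Ncount_insert {n : ℕ} {a : BEdge n} {T : Finset (BEdge n)} (h : a ∉ T) :
    Ncount (insert a T) = 2 * (∑ e ∈ T, (crosses a e).toNat) + Ncount T := by
  unfold Ncount
  rw [Finset.sum_insert h]
  rw [Finset.sum_insert h, crosses_self]
  have : ∀ e ∈ T, (∑ f ∈ insert a T, (crosses e f).toNat)
      = (crosses a e).toNat + ∑ f ∈ T, (crosses e f).toNat := by
    intro e he
    rw [Finset.sum_insert h, crosses_comm]
  rw [Finset.sum_congr rfl this, Finset.sum_add_distrib]
  simp [Bool.toNat]; ring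

lemma Ncount_even {n : ℕ} (T : Finset (BEdge n)) : Even (Ncount T) := by
  induction T using Finset.induction_on with
  | empty => simp [Ncount]
  | insert _ _ h ih => rw [Ncount_insert h]; exact (even_two_mul _).add ih

lemma crossingNumber_eq {n : ℕ} (μ : BrauerDiagram n) :
    crossingNumber μ = Ncount (edges μ) / 2 := by
  unfold crossingNumber
  congr 1
  have h1 : (edges μ).offDiag = ((edges μ) ×ˢ (edges μ)).filter fun p => p.1 ≠ p.2 := by
    ext p; simp [Finset.mem_offDiag, and_assoc]
  rw [h1, Finset.filter_filter, Finset.card_filter]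
  have : ∀ p ∈ (edges μ) ×ˢ (edges μ),
      (if p.1 ≠ p.2  ∧  crosses p.1 p.2 = true then 1 else 0) = (crosses p.1 p.2).toNat := by
    rintro ⟨e, f⟩ -
    by_cases hef : e = f
    · subst hef; simp [crosses_self]
    · simp only [ne_eq, hef, not_false_iff, true_and]
      by_cases hc : crosses e f = true <;> simp [hc]
  rw [Finset.sum_congr rfl this]
  unfold Ncount
  exact Finset.sum_product (edges μ) (edges μ) fun p => (crosses p.1 p.2).toNat

lemma edgeOf_cup_endpoints {n : ℕ} {x y : BVertex n} {p q : Fin n}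
    (h : edgeOf x y = .cup p q) : x = .inl p  ∨  x = .inl q := by
  cases x with
  | inl a => cases y with
    | inl b =>
      simp only [edgeOf, BEdge.cup.injEq] at h
      rcases le_total a b with hab | hab
      · left; rw [min_eq_left hab] at h; rw [h.1]
      · right; rw [max_eq_left hab] at h; rw [h.2]
    | inr b => simp [edgeOf] at h
  | inr a => cases y <;> simp [edgeOf] at h

lemma edgeOf_cap_endpoints {n : ℕ} {x y : BVertex n} {p q : Fin n}
    (h : edgeOf x y = .cap p q) : x = .inr p  ∨  x = .inr q := by
  cases x with
  | inl a => cases y <;> simp [edgeOf] at h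
  | inr a => cases y with
    | inl b => simp [edgeOf] at h
    | inr b =>
      simp only [edgeOf, BEdge.cap.injEq] at h
      rcases le_total a b with hab | hab
      · left; rw [min_eq_left hab] at h; rw [h.1]
      · right; rw [max_eq_left hab] at h; rw [h.2]

lemma edgeOf_arc_endpoints {n : ℕ} {x y : BVertex n} {p q : Fin n}
    (h : edgeOf x y = .arc p q) : x = .inl p  ∨  x = .inr q := by
  cases x with
  | inl a => cases y with
    | inl b => simp [edgeOf] at h
    | inr b => simp only [edgeOf, BEdge.arc.injEq] at h; left; rw [h.1]
  | inr a => cases y with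
    | inl b => simp only [edgeOf, BEdge.arc.injEq] at h; right; rw [h.2]
    | inr b => simp [edgeOf] at h

lemma toNat_decide (p : Prop) [Decidable p] : (decide p).toNat = if p then 1 else 0 := by
  by_cases h : p <;> simp [h]

lemma par_cup (i j p q : ℕ) (hij : i < j) (hpq : p < q) (h1:p≠i) (h2:p≠j) (h3:q≠i) (h4:q≠j) :
    ((if ((i < p ∧ p < j ∧ j < q) ∨ (p < i ∧ i < q ∧ q < j)) then 1 else 0) + 0) % 2
      = ((if (p < i ∧ i < q) then 1 else 0) + (if (p < j ∧ j < q) then 1 else 0)) % 2 := by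
  split_ifs <;> omega

lemma par_cap (k l p q : ℕ) (hkl : k < l) (hpq : p < q) (h1:p≠k) (h2:p≠l) (h3:q≠k) (h4:q≠l) :
    (0 + (if ((k < p ∧ p < l ∧ l < q) ∨ (p < k ∧ k < q ∧ q < l)) then 1 else 0)) % 2
      = ((if (p < k ∧ k < q) then 1 else 0) + (if (p < l ∧ l < q) then 1 else 0)) % 2 := by
  split_ifs <;> omega

lemma par_arc (i j k l a b : ℕ) (hij : i < j) (hkl : k < l) (h1:a≠i) (h2:a≠j) (h3:b≠k) (h4:b≠l) :
    ((if (i < a ∧ a < j) then 1 else 0) + (if (k < b ∧ b < l) then 1 else 0)) % 2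
      = ((if ((i < a ∧ b < k) ∨ (a < i ∧ k < b)) then 1 else 0) + (if ((j < a ∧ b < l) ∨ (a < j ∧ l < b)) then 1 else 0)) % 2 := by
  split_ifs <;> omega


set_option maxHeartbeats 1600000 in
/-- Lemma (a): replacing a cup `{T_i,T_j}` and a cap `{B_k,B_l}` by the two arcs
`{T_i,B_k}` and `{T_j,B_l}`, all other edges remaining the same, preserves the
parity of the crossing number. -/
theorem cup_cap_to_arcs_parity (n : ℕ) (hn : 1 ≤ n) (i j k l : Fin n)
    (hij : i < j) (hkl : k < l) (μ μ' : BrauerDiagram n)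
    (hcup : μ.1 (Sum.inl i) = Sum.inl j)
    (hcap : μ.1 (Sum.inr k) = Sum.inr l)
    (harc1 : μ'.1 (Sum.inl i) = Sum.inr k)
    (harc2 : μ'.1 (Sum.inl j) = Sum.inr l)
    (hagree : ∀ x : BVertex n, x ≠ Sum.inl i → x ≠ Sum.inl j →
      x ≠ Sum.inr k → x ≠ Sum.inr l → μ.1 x = μ'.1 x) :
    (-1 : ℤ) ^ crossingNumber μ = (-1 : ℤ) ^ crossingNumber μ' := by
  classical
  have hμinv := μ.2.1
  have hμ'inv := μ'.2.1
  have hcup' : μ.1 (Sum.inl j) = Sum.inl i := by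
    have h := hμinv (Sum.inl i); rw [hcup] at h; exact h
  have hcap' : μ.1 (Sum.inr l) = Sum.inr k := by
    have h := hμinv (Sum.inr k); rw [hcap] at h; exact h
  have harc1' : μ'.1 (Sum.inr k) = Sum.inl i := by
    have h := hμ'inv (Sum.inl i); rw [harc1] at h; exact h
  have harc2' : μ'.1 (Sum.inr l) = Sum.inl j := by
    have h := hμ'inv (Sum.inl j); rw [harc2] at h; exact h
  set V0 : Finset (BVertex n) :=
    univ.filter (fun x => x ≠ Sum.inl i ∧ x ≠ Sum.inl j ∧ x ≠ Sum.inr k ∧ x ≠ Sum.inr l)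
    with hV0
  set R : Finset (BEdge n) := V0.image (fun x => edgeOf x (μ.1 x)) with hR
  have hmapV0 : ∀ x ∈ V0, μ.1 x ∈ V0 := by
    intro x hx
    simp only [hV0, mem_filter, mem_univ, true_and] at hx ⊢
    obtain ⟨h1, h2, h3, h4⟩ := hx
    refine ⟨?_, ?_, ?_, ?_⟩ <;> intro h
    · exact h2 (by rw [← hμinv x, h, hcup])
    · exact h1 (by rw [← hμinv x, h, hcup'])
    · exact h4 (by rw [← hμinv x, h, hcap])
    · exact h3 (by rw [← hμinv x, h, hcap'])
  have hedge_cup1 : edgeOf (Sum.inl i) (Sum.inl j) = BEdge.cup i j := by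
    simp [edgeOf, min_eq_left hij.le, max_eq_right hij.le]
  have hedge_cup2 : edgeOf (Sum.inl j) (Sum.inl i) = BEdge.cup i j := by
    simp [edgeOf, min_eq_right hij.le, max_eq_left hij.le]
  have hedge_cap1 : edgeOf (Sum.inr k) (Sum.inr l) = BEdge.cap k l := by
    simp [edgeOf, min_eq_left hkl.le, max_eq_right hkl.le]
  have hedge_cap2 : edgeOf (Sum.inr l) (Sum.inr k) = BEdge.cap k l := by
    simp [edgeOf, min_eq_right hkl.le, max_eq_left hkl.le]
  have hEμ : edges μ = insert (BEdge.cup i j) (insert (BEdge.cap k l) R) := by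
    ext e
    simp only [edges, mem_image, mem_univ, true_and, mem_insert]
    constructor
    · rintro ⟨x, -, rfl⟩
      by_cases h1 : x = Sum.inl i
      · subst h1; left; rw [hcup]; exact hedge_cup1
      by_cases h2 : x = Sum.inl j
      · subst h2; left; rw [hcup']; exact hedge_cup2
      by_cases h3 : x = Sum.inr k
      · subst h3; right; left; rw [hcap]; exact hedge_cap1
      by_cases h4 : x = Sum.inr l
      · subst h4; right; left; rw [hcap']; exact hedge_cap2
      · right; right
        exact mem_image.mpr ⟨x, by simp [hV0, h1, h2, h3, h4], rfl⟩
    · rintro (rfl | rfl | he)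
      · exact ⟨Sum.inl i, by rw [hcup]; exact hedge_cup1⟩
      · exact ⟨Sum.inr k, by rw [hcap]; exact hedge_cap1⟩
      · obtain ⟨x, -, rfl⟩ := mem_image.mp he
        exact ⟨x, rfl⟩
  have hEμ' : edges μ' = insert (BEdge.arc i k) (insert (BEdge.arc j l) R) := by
    ext e
    simp only [edges, mem_image, mem_univ, true_and, mem_insert]
    constructor
    · rintro ⟨x, -, rfl⟩
      by_cases h1 : x = Sum.inl i
      · subst h1; left; rw [harc1]; rfl
      by_cases h2 : x = Sum.inl j
      · subst h2; right; left; rw [harc2]; rfl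
      by_cases h3 : x = Sum.inr k
      · subst h3; left; rw [harc1']; rfl
      by_cases h4 : x = Sum.inr l
      · subst h4; right; left; rw [harc2']; rfl
      · right; right
        refine mem_image.mpr ⟨x, by simp [hV0, h1, h2, h3, h4], ?_⟩
        rw [hagree x h1 h2 h3 h4]
    · rintro (rfl | rfl | he)
      · exact ⟨Sum.inl i, by rw [harc1]; rfl⟩
      · exact ⟨Sum.inl j, by rw [harc2]; rfl⟩
      · obtain ⟨x, hx, rfl⟩ := mem_image.mp he
        refine ⟨x, ?_⟩
        simp only [hV0, mem_filter, mem_univ, true_and] at hx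
        rw [hagree x hx.1 hx.2.1 hx.2.2.1 hx.2.2.2]
  have hcupR : BEdge.cup i j ∉ R := by
    intro h
    obtain ⟨x, hx, hxe⟩ := mem_image.mp h
    simp only [hV0, mem_filter, mem_univ, true_and] at hx
    rcases edgeOf_cup_endpoints hxe with rfl | rfl
    · exact hx.1 rfl
    · exact hx.2.1 rfl
  have hcapR : BEdge.cap k l ∉ R := by
    intro h
    obtain ⟨x, hx, hxe⟩ := mem_image.mp h
    simp only [hV0, mem_filter, mem_univ, true_and] at hx
    rcases edgeOf_cap_endpoints hxe with rfl | rfl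
    · exact hx.2.2.1 rfl
    · exact hx.2.2.2 rfl
  have harc1R : BEdge.arc i k ∉ R := by
    intro h
    obtain ⟨x, hx, hxe⟩ := mem_image.mp h
    simp only [hV0, mem_filter, mem_univ, true_and] at hx
    rcases edgeOf_arc_endpoints hxe with rfl | rfl
    · exact hx.1 rfl
    · exact hx.2.2.1 rfl
  have harc2R : BEdge.arc j l ∉ R := by
    intro h
    obtain ⟨x, hx, hxe⟩ := mem_image.mp h
    simp only [hV0, mem_filter, mem_univ, true_and] at hx
    rcases edgeOf_arc_endpoints hxe with rfl | rfl
    · exact hx.2.1 rfl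
    · exact hx.2.2.2 rfl
  have hcupcap : BEdge.cup i j ∉ insert (BEdge.cap k l) R := by
    simp only [mem_insert, not_or]
    exact ⟨fun h => (by cases h), hcupR⟩
  have harc12 : BEdge.arc i k ∉ insert (BEdge.arc j l) R := by
    simp only [mem_insert, not_or]
    refine ⟨fun h => ?_, harc1R⟩
    rw [BEdge.arc.injEq] at h
    exact absurd h.1 hij.ne
  have h1 : Ncount (edges μ) =
      2 * ((∑ e ∈ R, (crosses (BEdge.cup i j) e).toNat)
        + (∑ e ∈ R, (crosses (BEdge.cap k l) e).toNat)) + Ncount R := by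
    rw [hEμ, Ncount_insert hcupcap, Ncount_insert hcapR, Finset.sum_insert hcapR]
    have hf : crosses (BEdge.cup i j) (BEdge.cap k l) = false := rfl
    rw [hf]
    simp [Bool.toNat]; ring
  have h2 : Ncount (edges μ') =
      2 * ((∑ e ∈ R, (crosses (BEdge.arc i k) e).toNat)
        + (∑ e ∈ R, (crosses (BEdge.arc j l) e).toNat)) + Ncount R := by
    rw [hEμ', Ncount_insert harc12, Ncount_insert harc2R, Finset.sum_insert harc2R]
    have hf : crosses (BEdge.arc i k) (BEdge.arc j l) = false := by
      simp only [crosses, decide_eq_false_iff_not, Fin.lt_def]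
      have hij' : (i : ℕ) < j := hij
      have hkl' : (k : ℕ) < l := hkl
      omega
    rw [hf]
    simp [Bool.toNat]; ring
  have key : ∀ e ∈ R,
      ((crosses (BEdge.cup i j) e).toNat + (crosses (BEdge.cap k l) e).toNat) % 2
        = ((crosses (BEdge.arc i k) e).toNat + (crosses (BEdge.arc j l) e).toNat) % 2 := by
    intro e he
    obtain ⟨x, hx, rfl⟩ := mem_image.mp he
    have hx' : μ.1 x ∈ V0 := hmapV0 x hx
    have hne : μ.1 x ≠ x := μ.2.2 x
    have hij' : (i : ℕ) < j := hij
    have hkl' : (k : ℕ) < l := hkl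
    rcases x with a | a <;> rcases hyv : μ.1 _ with b | b <;>
        rw [hyv] at hx' hne <;>
        simp only [hV0, mem_filter, mem_univ, true_and, ne_eq, Sum.inl.injEq, Sum.inr.injEq,
          not_false_eq_true, and_true, true_and, Sum.inl_ne_inr, Sum.inr_ne_inl] at hx hx'
    -- case inl a, inl b : cup
    ·
      have ha1 : (a : ℕ) ≠ i := fun h => hx.1 (Fin.ext h)
      have ha2 : (a : ℕ) ≠ j := fun h => hx.2 (Fin.ext h)
      have hb1 : (b : ℕ) ≠ i := fun h => hx'.1 (Fin.ext h)
      have hb2 : (b : ℕ) ≠ j := fun h => hx'.2 (Fin.ext h)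
      have hab : (a : ℕ) ≠ b := fun h => hne (by rw [Fin.ext h])
      simp only [edgeOf]
      rcases le_total a b with hle | hle
      · rw [min_eq_left hle, max_eq_right hle]
        simp only [crosses, toNat_decide, Bool.toNat_false, Fin.lt_def]
        split_ifs <;> omega
      · rw [min_eq_right hle, max_eq_left hle]
        simp only [crosses, toNat_decide, Bool.toNat_false, Fin.lt_def]
        split_ifs <;> omega
    -- case inl a, inr b : arc a b
    ·
      have ha1 : (a : ℕ) ≠ i := fun h => hx.1 (Fin.ext h)
      have ha2 : (a : ℕ) ≠ j := fun h => hx.2 (Fin.ext h)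
      have hb1 : (b : ℕ) ≠ k := fun h => hx'.1 (Fin.ext h)
      have hb2 : (b : ℕ) ≠ l := fun h => hx'.2 (Fin.ext h)
      simp only [edgeOf]
      simp only [crosses, toNat_decide, Bool.toNat_false, Fin.lt_def]
      split_ifs <;> omega
    -- case inr a, inl b : arc b a
    ·
      have ha1 : (a : ℕ) ≠ k := fun h => hx.1 (Fin.ext h)
      have ha2 : (a : ℕ) ≠ l := fun h => hx.2 (Fin.ext h)
      have hb1 : (b : ℕ) ≠ i := fun h => hx'.1 (Fin.ext h)
      have hb2 : (b : ℕ) ≠ j := fun h => hx'.2 (Fin.ext h)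
      simp only [edgeOf]
      simp only [crosses, toNat_decide, Bool.toNat_false, Fin.lt_def]
      split_ifs <;> omega
    -- case inr a, inr b : cap
    ·
      have ha1 : (a : ℕ) ≠ k := fun h => hx.1 (Fin.ext h)
      have ha2 : (a : ℕ) ≠ l := fun h => hx.2 (Fin.ext h)
      have hb1 : (b : ℕ) ≠ k := fun h => hx'.1 (Fin.ext h)
      have hb2 : (b : ℕ) ≠ l := fun h => hx'.2 (Fin.ext h)
      have hab : (a : ℕ) ≠ b := fun h => hne (by rw [Fin.ext h])
      simp only [edgeOf]
      rcases le_total a b with hle | hle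
      · rw [min_eq_left hle, max_eq_right hle]
        simp only [crosses, toNat_decide, Bool.toNat_false, Fin.lt_def]
        split_ifs <;> omega
      · rw [min_eq_right hle, max_eq_left hle]
        simp only [crosses, toNat_decide, Bool.toNat_false, Fin.lt_def]
        split_ifs <;> omega
  -- assemble
  obtain ⟨m, hm⟩ := Ncount_even R
  rw [crossingNumber_eq, crossingNumber_eq, h1, h2]
  set B := (∑ e ∈ R, (crosses (BEdge.cup i j) e).toNat)
    + (∑ e ∈ R, (crosses (BEdge.cap k l) e).toNat) with hB
  set B' := (∑ e ∈ R, (crosses (BEdge.arc i k) e).toNat)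
    + (∑ e ∈ R, (crosses (BEdge.arc j l) e).toNat) with hB'
  have hBmod : B % 2 = B' % 2 := by
    rw [hB, hB', ← Finset.sum_add_distrib, ← Finset.sum_add_distrib,
      Finset.sum_nat_mod, Finset.sum_nat_mod R 2 fun e =>
        (crosses (BEdge.arc i k) e).toNat + (crosses (BEdge.arc j l) e).toNat]
    congr 1
    exact Finset.sum_congr rfl key
  have e1 : (2 * B + Ncount R) / 2 = B + m := by omega
  have e2 : (2 * B' + Ncount R) / 2 = B' + m := by omega
  rw [e1, e2, pow_add (-1 : ℤ) B m, pow_add (-1 : ℤ) B' m]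
  congr 1
  rcases Nat.even_or_odd B with hE | hE
  · have hE' : Even B' := by
      rw [Nat.even_iff] at hE ⊢; omega
    rw [hE.neg_one_pow, hE'.neg_one_pow]
  · have hE' : Odd B' := by
      rw [Nat.odd_iff] at hE ⊢; omega
    rw [hE.neg_one_pow, hE'.neg_one_pow]
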